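/- Let B : ℤ^k × ℤ^k → ℝ be a function that is additive and ℤ-homogeneous in each variable, symmetric, and satisfies B(z,z) = ‖z‖_∞² for a norm ‖·‖_∞ on ℝ^k restricted to ℤ^k. Then B extends uniquely to a symmetric bilinear form on ℝ^k, and this form is an inner product inducing the norm ‖·‖_∞. -/

import Mathlib

/-- A symmetric, biadditive, ℤ-homogeneous `B : ℤ^k × ℤ^k → ℝ` with
`B(z,z) = ‖z‖²` for a norm `‖·‖ = Nm` on `ℝ^k` extends uniquely to a bilinear form on
`ℝ^k`, and every such extension is symmetric, positive definite, and induces the norm. -/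
theorem stmt_3 (k : ℕ) (Nm : (Fin k → ℝ) → ℝ)
    (hN0 : ∀ x, 0 ≤ Nm x) (hNdef : ∀ x, Nm x = 0 ↔ x = 0)
    (hNsmul : ∀ (a : ℝ) (x), Nm (a • x) = |a| * Nm x)
    (hNtri : ∀ x y, Nm (x + y) ≤ Nm x + Nm y)
    (B : (Fin k → ℤ) → (Fin k → ℤ) → ℝ)
    (hBsymm : ∀ z w, B z w = B w z)
    (hBadd : ∀ z w u, B (z + w) u = B z u + B w u)
    (hBsmul : ∀ (m : ℤ) (z w), B (m • z) w = (m : ℝ) * B z w)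
    (hBdiag : ∀ z, B z z = (Nm fun i => (z i : ℝ)) ^ 2) :
    (∃! β : (Fin k → ℝ) →ₗ[ℝ] (Fin k → ℝ) →ₗ[ℝ] ℝ,
      ∀ z w : Fin k → ℤ, β (fun i => (z i : ℝ)) (fun i => (w i : ℝ)) = B z w) ∧
    ∀ β : (Fin k → ℝ) →ₗ[ℝ] (Fin k → ℝ) →ₗ[ℝ] ℝ,
      (∀ z w : Fin k → ℤ, β (fun i => (z i : ℝ)) (fun i => (w i : ℝ)) = B z w) →
      ((∀ x y, β x y = β y x) ∧ (∀ x, x ≠ 0 → 0 < β x x) ∧ ∀ x, β x x = Nm x ^ 2) := by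
  classical
  -- casting single vectors
  have hcast : ∀ i : Fin k,
      (fun t => ((Pi.single i 1 : Fin k → ℤ) t : ℝ)) = (Pi.single i 1 : Fin k → ℝ) := by
    intro i; funext t; by_cases h : t = i <;> simp [Pi.single_apply, h]
  set c : Fin k → Fin k → ℝ := fun i j => B (Pi.single i 1) (Pi.single j 1) with hc
  -- decompositions
  have hdecR : ∀ x : Fin k → ℝ, ∑ i, x i • (Pi.single i 1 : Fin k → ℝ) = x := by
    intro x
    conv_rhs => rw [← Finset.univ_sum_single x]
    refine Finset.sum_congr rfl fun i _ => ?_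
    rw [← Pi.single_smul, smul_eq_mul, mul_one]
  have hdecZ : ∀ z : Fin k → ℤ, ∑ i, z i • (Pi.single i 1 : Fin k → ℤ) = z := by
    intro z
    conv_rhs => rw [← Finset.univ_sum_single z]
    refine Finset.sum_congr rfl fun i _ => ?_
    rw [← Pi.single_smul, smul_eq_mul, mul_one]
  -- expansion of any bilinear form
  have hexp : ∀ (β : (Fin k → ℝ) →ₗ[ℝ] (Fin k → ℝ) →ₗ[ℝ] ℝ) (x y : Fin k → ℝ),
      β x y = ∑ i, ∑ j, x i * y j * β (Pi.single i 1) (Pi.single j 1) := by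
    intro β x y
    have step1 : β x y = ∑ i, x i * β (Pi.single i 1) y := by
      conv_lhs => rw [← hdecR x]
      rw [map_sum, LinearMap.sum_apply]
      exact Finset.sum_congr rfl fun i _ => by
        rw [map_smul, LinearMap.smul_apply, smul_eq_mul]
    rw [step1]
    refine Finset.sum_congr rfl fun i _ => ?_
    conv_lhs => rw [← hdecR y]
    rw [map_sum, Finset.mul_sum]
    refine Finset.sum_congr rfl fun j _ => ?_
    rw [map_smul, smul_eq_mul]
    ring
  -- expansion of B
  have hB0 : ∀ w, B 0 w = 0 := by
    intro w
    have h := hBsmul 0 w w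
    simpa using h
  have hBsums : ∀ (s : Finset (Fin k)) (f : Fin k → Fin k → ℤ) (w),
      B (∑ i ∈ s, f i) w = ∑ i ∈ s, B (f i) w := by
    intro s f w
    induction s using Finset.induction_on with
    | empty => simpa using hB0 w
    | insert _ _ h ih => rw [Finset.sum_insert h, Finset.sum_insert h, hBadd, ih]
  have hBexp : ∀ z w : Fin k → ℤ, B z w = ∑ i, ∑ j, (z i : ℝ) * (w j : ℝ) * c i j := by
    intro z w
    conv_lhs => rw [← hdecZ z]
    rw [hBsums]
    refine Finset.sum_congr rfl fun i _ => ?_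
    rw [hBsmul, hBsymm]
    conv_lhs => rw [← hdecZ w]
    rw [hBsums, Finset.mul_sum]
    refine Finset.sum_congr rfl fun j _ => ?_
    rw [hBsmul, hBsymm (Pi.single j 1)]
    ring
  -- the canonical extension
  set β₀ : (Fin k → ℝ) →ₗ[ℝ] (Fin k → ℝ) →ₗ[ℝ] ℝ :=
    LinearMap.mk₂ ℝ (fun x y => ∑ i, ∑ j, x i * y j * c i j)
      (by intro m₁ m₂ n; simp [add_mul, Finset.sum_add_distrib])
      (by intro a m n; simp [Finset.mul_sum, mul_assoc])
      (by intro m n₁ n₂; simp [mul_add, add_mul, Finset.sum_add_distrib])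
      (by
        intro a m n
        simp only [Pi.smul_apply, smul_eq_mul, Finset.mul_sum]
        refine Finset.sum_congr rfl fun i _ => Finset.sum_congr rfl fun j _ => ?_
        ring) with hβ₀
  have h₀agree : ∀ z w : Fin k → ℤ,
      β₀ (fun i => (z i : ℝ)) (fun i => (w i : ℝ)) = B z w := by
    intro z w
    rw [hβ₀, LinearMap.mk₂_apply, hBexp]
  -- values on singles of any agreeing extension
  have hsing : ∀ β : (Fin k → ℝ) →ₗ[ℝ] (Fin k → ℝ) →ₗ[ℝ] ℝ,
      (∀ z w : Fin k → ℤ, β (fun i => (z i : ℝ)) (fun i => (w i : ℝ)) = B z w) →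
      ∀ i j, β (Pi.single i 1) (Pi.single j 1) = c i j := by
    intro β hβ i j
    rw [← hcast i, ← hcast j, hβ]
  have hβexp : ∀ β : (Fin k → ℝ) →ₗ[ℝ] (Fin k → ℝ) →ₗ[ℝ] ℝ,
      (∀ z w : Fin k → ℤ, β (fun i => (z i : ℝ)) (fun i => (w i : ℝ)) = B z w) →
      ∀ x y, β x y = ∑ i, ∑ j, x i * y j * c i j := by
    intro β hβ x y
    rw [hexp β x y]
    exact Finset.sum_congr rfl fun i _ => Finset.sum_congr rfl fun j _ => by
      rw [hsing β hβ]
  -- uniqueness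
  have huniq : ∀ β : (Fin k → ℝ) →ₗ[ℝ] (Fin k → ℝ) →ₗ[ℝ] ℝ,
      (∀ z w : Fin k → ℤ, β (fun i => (z i : ℝ)) (fun i => (w i : ℝ)) = B z w) →
      β = β₀ := by
    intro β hβ
    refine LinearMap.ext fun x => LinearMap.ext fun y => ?_
    rw [hβexp β hβ, hβexp β₀ h₀agree]
  -- main properties
  have hmain : ∀ β : (Fin k → ℝ) →ₗ[ℝ] (Fin k → ℝ) →ₗ[ℝ] ℝ,
      (∀ z w : Fin k → ℤ, β (fun i => (z i : ℝ)) (fun i => (w i : ℝ)) = B z w) →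
      ((∀ x y, β x y = β y x) ∧ (∀ x, x ≠ 0 → 0 < β x x) ∧ ∀ x, β x x = Nm x ^ 2) := by
    intro β hβ
    have hsymm : ∀ x y, β x y = β y x := by
      intro x y
      rw [hβexp β hβ x y, hβexp β hβ y x, Finset.sum_comm]
      refine Finset.sum_congr rfl fun j _ => Finset.sum_congr rfl fun i _ => ?_
      rw [show c i j = c j i from hBsymm _ _]
      ring
    -- value on rational vectors
    have hdiagQ : ∀ q : Fin k → ℚ,
        β (fun i => ((q i : ℝ))) (fun i => ((q i : ℝ))) = Nm (fun i => ((q i : ℝ))) ^ 2 := by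
      intro q
      set d : ℕ := ∏ i, (q i).den with hd
      have hdpos : 0 < d := Finset.prod_pos fun i _ => (q i).pos
      have hz : ∀ i, ∃ z : ℤ, (q i) * (d : ℚ) = (z : ℚ) := by
        intro i
        obtain ⟨e, he⟩ := Finset.dvd_prod_of_mem (fun i => (q i).den) (Finset.mem_univ i)
        refine ⟨(q i).num * e, ?_⟩
        have hcd : (d : ℚ) = ((q i).den : ℚ) * (e : ℚ) := by
          rw [hd, he]; push_cast; ring
        rw [hcd, ← mul_assoc, Rat.mul_den_eq_num]
        push_cast; ring
      choose z hzq using hz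
      have hd0 : (d : ℝ) ≠ 0 := Nat.cast_ne_zero.mpr hdpos.ne'
      have hxz : (fun i => ((z i : ℝ))) = (d : ℝ) • (fun i => ((q i : ℝ))) := by
        funext i
        have h := hzq i
        have h' : ((q i : ℝ)) * (d : ℝ) = ((z i : ℝ)) := by exact_mod_cast congrArg (Rat.cast : ℚ → ℝ) h
        simp only [Pi.smul_apply, smul_eq_mul]
        linarith [h']
      have h2 : Nm (fun i => ((z i : ℝ))) = (d : ℝ) * Nm (fun i => ((q i : ℝ))) := by
        rw [hxz, hNsmul]
        congr 1
        rw [abs_of_nonneg (by positivity)]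
      have h1 : β (fun i => ((z i : ℝ))) (fun i => ((z i : ℝ))) = B z z := hβ z z
      rw [hxz] at h1
      simp only [map_smul, LinearMap.smul_apply, smul_eq_mul] at h1
      rw [hBdiag, h2] at h1
      have h3 : (d : ℝ) * ((d : ℝ) * (β (fun i => ((q i : ℝ))) fun i => ((q i : ℝ)))) =
          (d : ℝ) * ((d : ℝ) * (Nm (fun i => ((q i : ℝ))) ^ 2)) := by
        rw [h1]; ring
      exact mul_left_cancel₀ hd0 (mul_left_cancel₀ hd0 h3)
    -- continuity of the quadratic form
    have hQcont : Continuous fun x : Fin k → ℝ => β x x := by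
      have heq : (fun x : Fin k → ℝ => β x x) = fun x => ∑ i, ∑ j, x i * x j * c i j :=
        funext fun x => hβexp β hβ x x
      rw [heq]
      exact continuous_finset_sum _ fun i _ => continuous_finset_sum _ fun j _ =>
        (((continuous_apply i).mul (continuous_apply j)).mul continuous_const)
    -- continuity of Nm
    have hN0' : Nm 0 = 0 := (hNdef 0).mpr rfl
    have hNsum : ∀ (s : Finset (Fin k)) (f : Fin k → Fin k → ℝ),
        Nm (∑ i ∈ s, f i) ≤ ∑ i ∈ s, Nm (f i) := by
      intro s f
      induction s using Finset.induction_on with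
      | empty => simp [hN0']
      | insert _ _ h ih =>
        rw [Finset.sum_insert h, Finset.sum_insert h]
        exact le_trans (hNtri _ _) (by linarith [ih])
    have hNle : ∀ v : Fin k → ℝ, Nm v ≤ ∑ i, |v i| * Nm (Pi.single i 1) := by
      intro v
      calc Nm v = Nm (∑ i, v i • (Pi.single i 1 : Fin k → ℝ)) := by rw [hdecR v]
        _ ≤ ∑ i, Nm (v i • (Pi.single i 1 : Fin k → ℝ)) := hNsum _ _
        _ = ∑ i, |v i| * Nm (Pi.single i 1) := by
            exact Finset.sum_congr rfl fun i _ => hNsmul _ _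
    have hrev : ∀ x y, |Nm x - Nm y| ≤ Nm (x - y) := by
      intro x y
      have h1 : Nm x ≤ Nm (x - y) + Nm y := by
        have := hNtri (x - y) y
        simpa using this
      have hneg : Nm (y - x) = Nm (x - y) := by
        have : y - x = (-1 : ℝ) • (x - y) := by ring_nf; module
        rw [this, hNsmul]; simp
      have h2 : Nm y ≤ Nm (x - y) + Nm x := by
        have := hNtri (y - x) x
        rw [hneg] at this
        simpa using this
      rw [abs_sub_le_iff]
      constructor <;> linarith
    have hNcont : Continuous Nm := by
      rw [continuous_iff_continuousAt]
      intro x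
      have hgcont : Continuous fun y : Fin k → ℝ => ∑ i, |x i - y i| * Nm (Pi.single i 1) :=
        continuous_finset_sum _ fun i _ =>
          ((continuous_const.sub (continuous_apply i)).abs).mul continuous_const
      have hg0 : Filter.Tendsto (fun y : Fin k → ℝ => ∑ i, |x i - y i| * Nm (Pi.single i 1))
          (nhds x) (nhds 0) := by
        have := hgcont.tendsto x
        simpa using this
      have hbound : ∀ y, |Nm x - Nm y| ≤ ∑ i, |x i - y i| * Nm (Pi.single i 1) := by
        intro y
        refine le_trans (hrev x y) (le_trans (hNle (x - y)) ?_)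
        exact le_of_eq (Finset.sum_congr rfl fun i _ => by rw [Pi.sub_apply])
      refine tendsto_of_tendsto_of_tendsto_of_le_of_le
        (f := Nm) (g := fun y => Nm x - ∑ i, |x i - y i| * Nm (Pi.single i 1))
        (h := fun y => Nm x + ∑ i, |x i - y i| * Nm (Pi.single i 1)) ?_ ?_ ?_ ?_
      · simpa using (tendsto_const_nhds.sub hg0)
      · simpa using (tendsto_const_nhds.add hg0)
      · intro y
        have h := hbound y
        rw [abs_sub_le_iff] at h
        show Nm x - ∑ i, |x i - y i| * Nm (Pi.single i 1) ≤ Nm y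
        linarith [h.1, h.2]
      · intro y
        have h := hbound y
        rw [abs_sub_le_iff] at h
        show Nm y ≤ Nm x + ∑ i, |x i - y i| * Nm (Pi.single i 1)
        linarith [h.1, h.2]
    -- density of rational vectors
    have hdense : DenseRange (fun q : Fin k → ℚ => (fun i => ((q i : ℝ)) : Fin k → ℝ)) := by
      rw [Metric.denseRange_iff]
      intro x r hr
      have h : ∀ i, ∃ qi : ℚ, |x i - (qi : ℝ)| < r := fun i => exists_rat_near (x i) hr
      choose q hq using h
      exact ⟨q, by rw [dist_pi_lt_iff hr]; intro i; rw [Real.dist_eq]; exact hq i⟩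
    have hdiag : ∀ x, β x x = Nm x ^ 2 := by
      have heq : (fun x : Fin k → ℝ => β x x) = fun x => Nm x ^ 2 := by
        refine hdense.equalizer hQcont (hNcont.pow 2) (funext fun q => ?_)
        simpa using hdiagQ q
      exact fun x => congrFun heq x
    refine ⟨hsymm, ?_, hdiag⟩
    intro x hx
    rw [hdiag x]
    have hne : Nm x ≠ 0 := fun h => hx ((hNdef x).mp h)
    have hpos : 0 < Nm x := lt_of_le_of_ne (hN0 x) (Ne.symm hne)
    positivity
  exact ⟨⟨β₀, h₀agree, fun β hβ => huniq β hβ⟩, hmain⟩
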